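/- Let d, k, n ≥ 2 with k ≥ 2, and for i_1,…,i_n ∈ {2,…,k} and j ∈ {0,1,…,n−1} let A_{i_1,…,i_n;j} ⊆ F(ℝ^d,k)^n be the set of n-tuples (C_1,…,C_n) with c̄p(C_s) = i_s for s = 1,…,n and such that exactly j of the vectors e_{C_1},…,e_{C_n} equal −e_{C_1}. Then the closure of A_{i_1,…,i_n;j} in F(ℝ^d,k)^n is contained in the union of the sets A_{r_1,…,r_n;s} over all r_1 ≤ i_1, …, r_n ≤ i_n and s ≥ j. -/

import Mathlib

open unitInterval

noncomputable section

/-- Euclidean space ℝ^d. -/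
abbrev E (d : ℕ) : Type := EuclideanSpace ℝ (Fin d)

/-- The ordered configuration space F(ℝ^d, k) of k distinct points in ℝ^d,
viewed as the subspace of (ℝ^d)^k of injective tuples. -/
def Conf (d k : ℕ) : Set (Fin k → E d) := {x | Function.Injective x}

/-- The time i/(n-1) ∈ [0,1] at which the i-th configuration is visited. -/
def eTime (n : ℕ) (i : Fin n) : unitInterval :=
  Set.projIcc 0 1 zero_le_one ((i : ℝ) / ((n : ℝ) - 1))

/-- The evaluation map e_n : P(X) → X^n,
e_n(γ) = (γ(0), γ(1/(n-1)), …, γ((n-2)/(n-1)), γ(1)). -/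
def evalMap {X : Type*} [TopologicalSpace X] (n : ℕ) (γ : C(unitInterval, X)) : Fin n → X :=
  fun i => γ (eTime n i)

/-- `A ⊆ X^n` admits a continuous section of the evaluation map e_n. -/
def HasSec {X : Type*} [TopologicalSpace X] (n : ℕ) (A : Set (Fin n → X)) : Prop :=
  ∃ s : A → C(unitInterval, X), Continuous s ∧ ∀ a : A, evalMap n (s a) = (a : Fin n → X)

/-- The orienting unit vector e_C = (x_2 - x_1)/|x_2 - x_1| of the line L_C
through x_1 and x_2. -/
def eV {d k : ℕ} (hk : 2 ≤ k) (C : Fin k → E d) : E d :=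
  ‖C ⟨1, by omega⟩ - C ⟨0, by omega⟩‖⁻¹ • (C ⟨1, by omega⟩ - C ⟨0, by omega⟩)

/-- The orthogonal projection p_C : ℝ^d → L_C onto the affine line L_C
through x_1 and x_2. -/
def pC {d k : ℕ} (hk : 2 ≤ k) (C : Fin k → E d) (x : E d) : E d :=
  C ⟨0, by omega⟩ + (inner ℝ (x - C ⟨0, by omega⟩) (eV hk C) : ℝ) • eV hk C

/-- c̄p(C) = cardinality of {p_C(x_1),…,p_C(x_k)}. -/
def cpBar {d k : ℕ} (hk : 2 ≤ k) (C : Fin k → E d) : ℕ :=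
  (Set.range fun i => pC hk C (C i)).ncard

/-- The set A_{i_1,…,i_n;j} of n-tuples (C_1,…,C_n) ∈ F(ℝ^d,k)^n with
c̄p(C_s) = i_s for all s and exactly j of the vectors e_{C_1},…,e_{C_n} equal
-e_{C_1}. -/
def Atup (d k n : ℕ) (hk : 2 ≤ k) (hn : 2 ≤ n) (iv : Fin n → ℕ) (j : ℕ) :
    Set (Fin n → ↥(Conf d k)) :=
  {C | (∀ s : Fin n, cpBar hk ((C s : Fin k → E d)) = iv s) ∧
    {s : Fin n | eV hk ((C s : Fin k → E d)) =
      -eV hk ((C ⟨0, by omega⟩ : Fin k → E d))}.ncard = j}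

namespace Stmt17Aux

variable {d k : ℕ}

lemma eV_contAt (hk : 2 ≤ k) {C : Fin k → E d} (hC : Function.Injective C) :
    ContinuousAt (eV (d := d) hk) C := by
  have hne : C ⟨1, by omega⟩ - C ⟨0, by omega⟩ ≠ 0 := by
    rw [sub_ne_zero]
    exact fun h => absurd (hC h) (by simp [Fin.ext_iff])
  have h1 : ContinuousAt (fun C' : Fin k → E d => C' ⟨1, by omega⟩ - C' ⟨0, by omega⟩) C := by
    exact ContinuousAt.sub (continuousAt_apply _ _) (continuousAt_apply _ _)
  exact ((h1.norm).inv₀ (norm_ne_zero_iff.mpr hne)).smul h1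

lemma pC_contAt (hk : 2 ≤ k) {C : Fin k → E d} (hC : Function.Injective C) (i : Fin k) :
    ContinuousAt (fun C' : Fin k → E d => pC hk C' (C' i)) C := by
  have h0 : ContinuousAt (fun C' : Fin k → E d => C' ⟨0, by omega⟩) C :=
    (continuous_apply _).continuousAt
  have hi : ContinuousAt (fun C' : Fin k → E d => C' i) C :=
    (continuous_apply _).continuousAt
  have he := eV_contAt hk hC
  exact h0.add ((ContinuousAt.inner (𝕜 := ℝ) (hi.sub h0) he).smul he)

lemma cpBar_eventually (hk : 2 ≤ k) {C : Fin k → E d} (hC : Function.Injective C) :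
    ∀ᶠ C' in nhds C, cpBar hk C ≤ cpBar hk C' := by
  classical
  set f : Fin k → E d := fun i => pC hk C (C i) with hf
  have hev : ∀ᶠ C' in nhds C, ∀ i j : Fin k, f i ≠ f j →
      pC hk C' (C' i) ≠ pC hk C' (C' j) := by
    rw [Filter.eventually_all]
    intro i
    rw [Filter.eventually_all]
    intro j
    by_cases hij : f i = f j
    · filter_upwards with C' h; exact absurd hij h
    · have hg : ContinuousAt (fun C' : Fin k → E d =>
          pC hk C' (C' i) - pC hk C' (C' j)) C :=
        (pC_contAt hk hC i).sub (pC_contAt hk hC j)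
      have hgC : (fun C' : Fin k → E d => pC hk C' (C' i) - pC hk C' (C' j)) C ≠ 0 :=
        sub_ne_zero.mpr hij
      filter_upwards [hg.eventually_ne hgC] with C' h _
      exact sub_ne_zero.mp h
  filter_upwards [hev] with C' hP
  set rs := Set.rangeSplitting f with hrsdef
  have hrs : Function.Injective rs := Set.rangeSplitting_injective f
  have hfr : ∀ y : Set.range f, f (rs y) = y := Set.apply_rangeSplitting f
  have hinjS : Set.InjOn (fun i => pC hk C' (C' i)) (Set.range rs) := by
    rintro a ⟨y, rfl⟩ b ⟨z, rfl⟩ hab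
    by_contra hne
    have hfy : f (rs y) ≠ f (rs z) := by
      rw [hfr, hfr]
      exact fun h => hne (congrArg rs (Subtype.ext h))
    exact hP _ _ hfy hab
  have h1 : (Set.range f).ncard = (Set.range rs).ncard := by
    rw [← Nat.card_coe_set_eq, ← Nat.card_coe_set_eq]
    exact (Nat.card_range_of_injective hrs).symm
  calc cpBar hk C = (Set.range f).ncard := rfl
    _ = (Set.range rs).ncard := h1
    _ = ((fun i => pC hk C' (C' i)) '' Set.range rs).ncard :=
        (Set.ncard_image_of_injOn hinjS).symm
    _ ≤ cpBar hk C' := by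
        apply Set.ncard_le_ncard _ (Set.finite_range _)
        rintro _ ⟨a, _, rfl⟩; exact ⟨a, rfl⟩

lemma key (hk : 2 ≤ k) {n : ℕ} (hn : 2 ≤ n) (C : Fin n → ↥(Conf d k)) :
    ∀ᶠ C' in nhds C,
      (∀ s : Fin n, cpBar hk ((C s : Fin k → E d)) ≤ cpBar hk ((C' s : Fin k → E d))) ∧
      {s : Fin n | eV hk ((C' s : Fin k → E d)) =
          -eV hk ((C' ⟨0, by omega⟩ : Fin k → E d))} ⊆
        {s : Fin n | eV hk ((C s : Fin k → E d)) =
          -eV hk ((C ⟨0, by omega⟩ : Fin k → E d))} := by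
  have hπ : ∀ s : Fin n, ContinuousAt
      (fun C' : Fin n → ↥(Conf d k) => (C' s : Fin k → E d)) C :=
    fun s => (continuous_subtype_val.comp (continuous_apply s)).continuousAt
  refine Filter.Eventually.and ?_ ?_
  · rw [Filter.eventually_all]
    intro s
    exact (hπ s).eventually (cpBar_eventually hk (C s).2)
  · have : ∀ᶠ C' in nhds C, ∀ s : Fin n,
        (eV hk ((C s : Fin k → E d)) ≠ -eV hk ((C ⟨0, by omega⟩ : Fin k → E d))) →
        eV hk ((C' s : Fin k → E d)) ≠ -eV hk ((C' ⟨0, by omega⟩ : Fin k → E d)) := by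
      rw [Filter.eventually_all]
      intro s
      by_cases hs : eV hk ((C s : Fin k → E d)) =
          -eV hk ((C ⟨0, by omega⟩ : Fin k → E d))
      · filter_upwards with C' h; exact absurd hs h
      · have hg : ContinuousAt (fun C' : Fin n → ↥(Conf d k) =>
            eV hk ((C' s : Fin k → E d)) +
              eV hk ((C' ⟨0, by omega⟩ : Fin k → E d))) C :=
          (Filter.Tendsto.comp (eV_contAt hk (C s).2) (hπ s)).add
            (ContinuousAt.comp (g := eV hk) (f := fun C' : Fin n → ↥(Conf d k) => (C' ⟨0, by omega⟩ : Fin k → E d))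
              (eV_contAt hk (C ⟨0, by omega⟩).2) (hπ ⟨0, by omega⟩))
        have hgC : eV hk ((C s : Fin k → E d)) +
            eV hk ((C ⟨0, by omega⟩ : Fin k → E d)) ≠ 0 := by
          intro h
          exact hs (eq_neg_of_add_eq_zero_left h)
        filter_upwards [hg.eventually_ne hgC] with C' h _
        intro heq
        exact h (by rw [heq]; simp)
    filter_upwards [this] with C' h
    intro s hsmem
    by_contra hsC
    exact h s hsC hsmem

end Stmt17Aux

/-- For d, k, n ≥ 2, i_1,…,i_n ∈ {2,…,k} and j ∈ {0,…,n-1}, the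
closure of A_{i_1,…,i_n;j} in F(ℝ^d,k)^n is contained in the union of the sets
A_{r_1,…,r_n;s} over all r_1 ≤ i_1, …, r_n ≤ i_n and s ≥ j. -/
theorem stmt17 (d k n : ℕ) (hd : 2 ≤ d) (hk : 2 ≤ k) (hn : 2 ≤ n)
    (iv : Fin n → ℕ) (hiv : ∀ s, 2 ≤ iv s ∧ iv s ≤ k) (j : ℕ) (hj : j ≤ n - 1) :
    closure (Atup d k n hk hn iv j) ⊆
      ⋃ (rv : Fin n → ℕ) (m : ℕ) (_ : (∀ s, rv s ≤ iv s) ∧ j ≤ m),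
        Atup d k n hk hn rv m := by
  intro C hC
  obtain ⟨C', hC'P, hC'A⟩ := mem_closure_iff_nhds.mp hC _ (Stmt17Aux.key hk hn C)
  refine Set.mem_iUnion.mpr ⟨fun s => cpBar hk ((C s : Fin k → E d)), Set.mem_iUnion.mpr
    ⟨{s : Fin n | eV hk ((C s : Fin k → E d)) =
        -eV hk ((C ⟨0, by omega⟩ : Fin k → E d))}.ncard, Set.mem_iUnion.mpr ⟨⟨?_, ?_⟩, ?_, ?_⟩⟩⟩
  · intro s
    calc cpBar hk ((C s : Fin k → E d)) ≤ cpBar hk ((C' s : Fin k → E d)) := hC'P.1 s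
      _ = iv s := hC'A.1 s
  · calc j = {s : Fin n | eV hk ((C' s : Fin k → E d)) =
          -eV hk ((C' ⟨0, by omega⟩ : Fin k → E d))}.ncard := (hC'A.2).symm
      _ ≤ _ := Set.ncard_le_ncard hC'P.2 (Set.toFinite _)
  · exact fun s => rfl
  · rfl
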